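/- arXiv:2103.12483 — 3 statements merged into one kernel-verified Lean document; each statement's English description precedes it below -/
import Mathlib

section
/- Let g₀,…,g_N−1 denote the rows of P_n = P^{⊗n} over 𝔽₂, indexed from 0. For any index i and any finite subset I of indices strictly greater than i, the Hamming weight of g_i ⊕ ⨁_{k∈I} g_k is at least w(g_i). -/
open Matrix

/-- The 2×2 polar kernel `P = [[1,0],[1,1]]` over GF(2). -/
def Pmat : Matrix (Fin 2) (Fin 2) (ZMod 2) := !![1, 0; 1, 1]

/-- The polar transform `P_n = P^{⊗n}`, the n-fold Kronecker power of `Pmat`. -/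
def polarP : (n : ℕ) → Matrix (Fin (2 ^ n)) (Fin (2 ^ n)) (ZMod 2)
  | 0 => 1
  | n + 1 =>
    Matrix.reindex (finProdFinEquiv.trans (finCongr (by ring)))
      (finProdFinEquiv.trans (finCongr (by ring)))
      (Matrix.kroneckerMap (· * ·) Pmat (polarP n))

lemma hammingNorm_comp_equiv {ι κ α : Type*} [Fintype ι] [Fintype κ] [DecidableEq α] [Zero α]
    (f : ι → α) (e : κ ≃ ι) : hammingNorm (fun k => f (e k)) = hammingNorm f := by
  simp only [hammingNorm]
  exact Finset.card_bij (fun k _ => e k) (by simp) (fun _ _ _ _ h => e.injective h)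
    (fun i hi => ⟨e.symm i, by simpa using hi, by simp⟩)

lemma hammingNorm_prod {κ α : Type*} [Fintype κ] [DecidableEq α] [Zero α]
    (g : Fin 2 × κ → α) :
    hammingNorm g = hammingNorm (fun d => g (0, d)) + hammingNorm (fun d => g (1, d)) := by
  simp only [hammingNorm, Finset.card_filter]
  rw [Fintype.sum_prod_type, Fin.sum_univ_two]

lemma hammingNorm_le_add {ι α : Type*} [Fintype ι] [DecidableEq α] [AddCommGroup α]
    (x y : ι → α) : hammingNorm x ≤ hammingNorm (x + y) + hammingNorm y := by
  calc hammingNorm x = hammingDist (x + y) y := by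
        rw [hammingDist_comm, hammingDist_eq_hammingNorm, add_comm x y, neg_add_cancel_left]
    _ ≤ hammingDist (x + y) 0 + hammingDist 0 y := hammingDist_triangle _ _ _
    _ = hammingNorm (x + y) + hammingNorm y := by
        rw [hammingDist_zero_right, hammingDist_comm, hammingDist_zero_right]

lemma polar_aux : ∀ (n : ℕ) (i : Fin (2 ^ n)) (I : Finset (Fin (2 ^ n))),
    (∀ k ∈ I, i < k) →
    hammingNorm (polarP n i) ≤ hammingNorm (polarP n i + ∑ k ∈ I, polarP n k) := by
  intro n
  induction n with
  | zero =>
    intro i I hI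
    have hIe : I = ∅ := by
      apply Finset.eq_empty_of_forall_notMem
      intro k hk
      have h := hI k hk
      rw [Fin.lt_def] at h
      have h1 := i.isLt
      have h2 := k.isLt
      omega
    subst hIe
    have h0 : (∑ k ∈ (∅ : Finset (Fin (2 ^ 0))), polarP 0 k : Fin (2 ^ 0) → ZMod 2) = 0 :=
      Finset.sum_empty
    rw [h0, add_zero]
  | succ n ih =>
    intro i I hI
    simp only [polarP]
    set E : Fin 2 × Fin (2 ^ n) ≃ Fin (2 ^ (n + 1)) :=
      finProdFinEquiv.trans (finCongr (by ring)) with hEdef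
    set M := Matrix.reindex E E (Matrix.kroneckerMap (· * ·) Pmat (polarP n)) with hM
    have hE : ∀ p : Fin 2 × Fin (2 ^ n), ((E p : Fin (2 ^ (n + 1))) : ℕ)
        = p.2.val + 2 ^ n * p.1.val := by
      intro p
      simp [hEdef, finCongr_apply]
    have hval : ∀ k : Fin (2 ^ (n + 1)),
        (k : ℕ) = (E.symm k).2.val + 2 ^ n * (E.symm k).1.val := by
      intro k
      conv_lhs => rw [← E.apply_symm_apply k]
      rw [hE]
    have hrow : ∀ (k : Fin (2 ^ (n + 1))) (p : Fin 2 × Fin (2 ^ n)),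
        M k (E p) = Pmat (E.symm k).1 p.1 * polarP n (E.symm k).2 p.2 := by
      intro k p
      simp [hM, Matrix.reindex_apply, Matrix.submatrix_apply]
    rcases hab : E.symm i with ⟨a, b⟩
    -- split I by the first coordinate
    set I0 := I.filter (fun k => (E.symm k).1 = 0) with hI0
    set I1 := I.filter (fun k => ¬ (E.symm k).1 = 0) with hI1
    set B0 := I0.image (fun k => (E.symm k).2) with hB0
    set B1 := I1.image (fun k => (E.symm k).2) with hB1
    have hinj0 : ∀ x ∈ I0, ∀ y ∈ I0, (E.symm x).2 = (E.symm y).2 → x = y := by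
      intro x hx y hy h2
      have hx1 := (Finset.mem_filter.mp hx).2
      have hy1 := (Finset.mem_filter.mp hy).2
      exact E.symm.injective (Prod.ext (hx1.trans hy1.symm) h2)
    have hone : ∀ x ∈ I1, (E.symm x).1 = 1 := by
      intro x hx
      have hx1 := (Finset.mem_filter.mp hx).2
      have h2 := (E.symm x).1.isLt
      ext
      have : (E.symm x).1.val ≠ 0 := fun h => hx1 (Fin.ext h)
      simp only [Fin.val_one]
      omega
    have hinj1 : ∀ x ∈ I1, ∀ y ∈ I1, (E.symm x).2 = (E.symm y).2 → x = y := by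
      intro x hx y hy h2
      exact E.symm.injective (Prod.ext ((hone x hx).trans (hone y hy).symm) h2)
    set S0 : Fin (2 ^ n) → ZMod 2 := ∑ b' ∈ B0, polarP n b' with hS0
    set S1 : Fin (2 ^ n) → ZMod 2 := ∑ b' ∈ B1, polarP n b' with hS1
    have hS0' : ∀ d, S0 d = ∑ k ∈ I0, polarP n (E.symm k).2 d := by
      intro d
      rw [hS0, hB0]; exact (Finset.sum_apply _ _ _).trans (Finset.sum_image hinj0)
    have hS1' : ∀ d, S1 d = ∑ k ∈ I1, polarP n (E.symm k).2 d := by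
      intro d
      rw [hS1, hB1]; exact (Finset.sum_apply _ _ _).trans (Finset.sum_image hinj1)
    have hsplit : ∀ p : Fin 2 × Fin (2 ^ n),
        (M i + ∑ k ∈ I, M k) (E p)
          = Pmat a p.1 * polarP n b p.2 + Pmat 0 p.1 * S0 p.2 + Pmat 1 p.1 * S1 p.2 := by
      intro p
      have h1 : (∑ k ∈ I, M k) (E p) = ∑ k ∈ I, M k (E p) := by
        exact Finset.sum_apply _ _ _
      have h2 : ∑ k ∈ I0, M k (E p) = Pmat 0 p.1 * S0 p.2 := by
        rw [hS0', Finset.mul_sum]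
        apply Finset.sum_congr rfl
        intro k hk
        rw [hrow, (Finset.mem_filter.mp hk).2]
      have h3 : ∑ k ∈ I1, M k (E p) = Pmat 1 p.1 * S1 p.2 := by
        rw [hS1', Finset.mul_sum]
        apply Finset.sum_congr rfl
        intro k hk
        rw [hrow, hone k hk]
      rw [Pi.add_apply, h1,
        ← Finset.sum_filter_add_sum_filter_not I (fun k => (E.symm k).1 = 0), ← hI0, ← hI1,
        h2, h3, hrow, hab]
      ring
    have hrowi : ∀ p : Fin 2 × Fin (2 ^ n),
        M i (E p) = Pmat a p.1 * polarP n b p.2 := by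
      intro p; rw [hrow, hab]
    -- rewrite norms through E and the product split
    rw [← hammingNorm_comp_equiv (M i) E, ← hammingNorm_comp_equiv (M i + ∑ k ∈ I, M k) E]
    rw [hammingNorm_prod, hammingNorm_prod]
    simp only [hrowi, hsplit]
    fin_cases a
    all_goals simp only [Fin.mk_zero, Fin.mk_one] at *
    · -- a = 0 : row i lives in the upper half
      have hb0 : ∀ b' ∈ B0, b < b' := by
        intro b' hb'
        obtain ⟨k, hk, rfl⟩ := Finset.mem_image.mp hb'
        have hk0 := (Finset.mem_filter.mp hk).2
        have hik := hI k (Finset.mem_filter.mp hk).1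
        rw [Fin.lt_def] at hik ⊢
        have h1 := hval i
        have h2 := hval k
        rw [hab] at h1
        rw [hk0] at h2
        simpa [h1, h2] using hik
      have e1 : (fun d => Pmat 0 (0 : Fin 2) * polarP n b d + Pmat 0 (0 : Fin 2) * S0 d
            + Pmat 1 (0 : Fin 2) * S1 d) = (polarP n b + S0) + S1 := by
        funext d
        show Pmat 0 0 * polarP n b d + Pmat 0 0 * S0 d + Pmat 1 0 * S1 d = _
        have : Pmat 0 0 = 1 := by decide
        have h10 : Pmat 1 0 = 1 := by decide
        simp [this, h10]
      have e2 : (fun d => Pmat 0 (1 : Fin 2) * polarP n b d + Pmat 0 (1 : Fin 2) * S0 d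
            + Pmat 1 (1 : Fin 2) * S1 d) = S1 := by
        funext d
        have h01 : Pmat 0 1 = 0 := by decide
        have h11 : Pmat 1 1 = 1 := by decide
        simp [h01, h11]
      have e3 : (fun d => Pmat 0 (0 : Fin 2) * polarP n b d) = polarP n b := by
        funext d
        have : Pmat 0 0 = 1 := by decide
        simp [this]
      have e4 : (fun d => Pmat 0 (1 : Fin 2) * polarP n b d) = (0 : Fin (2 ^ n) → ZMod 2) := by
        funext d
        have : Pmat 0 1 = 0 := by decide
        simp [this]
      rw [e1, e2, e3, e4]
      have step1 : hammingNorm (polarP n b) ≤ hammingNorm (polarP n b + S0) := ih b B0 hb0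
      have step2 : hammingNorm (polarP n b + S0)
          ≤ hammingNorm (polarP n b + S0 + S1) + hammingNorm S1 :=
        hammingNorm_le_add _ _
      simp only [hammingNorm_zero, add_zero]
      omega
    · -- a = 1 : row i lives in the lower half
      have hI0e : I0 = ∅ := by
        apply Finset.eq_empty_of_forall_notMem
        intro k hk
        have hk0 := (Finset.mem_filter.mp hk).2
        have hik := hI k (Finset.mem_filter.mp hk).1
        rw [Fin.lt_def] at hik
        have h1 := hval i
        have h2 := hval k
        rw [hab] at h1
        rw [hk0] at h2
        have hbn := (E.symm k).2.isLt
        simp only [Fin.val_one, Fin.val_zero] at h1 h2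
        omega
      have hS0z : S0 = 0 := by
        have hB0e : B0 = ∅ := by
          rw [show B0 = Finset.image (fun k => (E.symm k).2) I0 from rfl, hI0e]
          simp
        rw [show S0 = ∑ b' ∈ B0, polarP n b' from rfl, hB0e]
        exact Finset.sum_empty
      have hb1 : ∀ b' ∈ B1, b < b' := by
        intro b' hb'
        obtain ⟨k, hk, rfl⟩ := Finset.mem_image.mp hb'
        have hk1 := hone k hk
        have hik := hI k (Finset.mem_filter.mp hk).1
        rw [Fin.lt_def] at hik ⊢
        have h1 := hval i
        have h2 := hval k
        rw [hab] at h1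
        rw [hk1] at h2
        simp only [Fin.val_one] at h1 h2
        omega
      have e1 : (fun d => Pmat 1 (0 : Fin 2) * polarP n b d + Pmat 0 (0 : Fin 2) * S0 d
            + Pmat 1 (0 : Fin 2) * S1 d) = polarP n b + S1 := by
        funext d
        have h10 : Pmat 1 0 = 1 := by decide
        simp [h10, hS0z]
      have e2 : (fun d => Pmat 1 (1 : Fin 2) * polarP n b d + Pmat 0 (1 : Fin 2) * S0 d
            + Pmat 1 (1 : Fin 2) * S1 d) = polarP n b + S1 := by
        funext d
        have h01 : Pmat 0 1 = 0 := by decide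
        have h11 : Pmat 1 1 = 1 := by decide
        simp [h01, h11]
      have e3 : (fun d => Pmat 1 (0 : Fin 2) * polarP n b d) = polarP n b := by
        funext d
        have h10 : Pmat 1 0 = 1 := by decide
        simp [h10]
      have e4 : (fun d => Pmat 1 (1 : Fin 2) * polarP n b d) = polarP n b := by
        funext d
        have h11 : Pmat 1 1 = 1 := by decide
        simp [h11]
      rw [e1, e2, e3, e4]
      have step1 : hammingNorm (polarP n b) ≤ hammingNorm (polarP n b + S1) := ih b B1 hb1
      omega

/-- (Lemma 1) For any row index `i` and any set `I` of indices strictly greater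
than `i`, the weight of `g_i ⊕ ⨁_{k∈I} g_k` is at least `w(g_i)`. -/
theorem coset_weight_lower_bound (n : ℕ) (i : Fin (2 ^ n)) (I : Finset (Fin (2 ^ n)))
    (hI : ∀ k ∈ I, i < k) :
    hammingNorm (polarP n i) ≤ hammingNorm (polarP n i + ∑ k ∈ I, polarP n k) := by
  exact polar_aux n i I hI
end

section
/- For any nonzero v ∈ 𝔽₂^N, the minimum Hamming weight of a nonzero codeword of a polar code with information set 𝒜 (i.e., of vectors v·P_n with supp(v) ⊆ 𝒜, v ≠ 0) is at least min_{i∈𝒜} 2^{w(i)}. -/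
open Matrix

lemma digits_sum_pow_add : ∀ n i : ℕ, i < 2 ^ n →
    (Nat.digits 2 (2 ^ n + i)).sum = 1 + (Nat.digits 2 i).sum := by
  intro n
  induction n with
  | zero =>
    intro i hi
    interval_cases i
    simp
  | succ n ih =>
    intro i hi
    have hk : (0:ℕ) < 2 ^ n := Nat.pow_pos (by norm_num)
    have hpow : (2:ℕ) ^ (n+1) = 2 * 2 ^ n := by ring
    have h1 : 0 < 2 ^ (n+1) + i := by positivity
    rw [Nat.digits_def' (by norm_num : (1:ℕ) < 2) h1]
    have hmod : (2 ^ (n+1) + i) % 2 = i % 2 := by omega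
    have hdiv : (2 ^ (n+1) + i) / 2 = 2 ^ n + i / 2 := by omega
    have hlt : i / 2 < 2 ^ n := by omega
    rw [List.sum_cons, hmod, hdiv, ih _ hlt]
    rcases Nat.eq_zero_or_pos i with h0 | h0
    · subst h0; simp
    · rw [Nat.digits_def' (by norm_num : (1:ℕ) < 2) h0, List.sum_cons]
      omega

/-- The reindexing equivalence used in `polarP`. -/
def eqv (n : ℕ) : Fin 2 × Fin (2 ^ n) ≃ Fin (2 ^ (n+1)) :=
  finProdFinEquiv.trans (finCongr (by ring))

lemma eqv_val (n : ℕ) (a : Fin 2) (i : Fin (2 ^ n)) :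
    ((eqv n) (a, i)).val = i.val + 2 ^ n * a.val := by
  simp [eqv, finProdFinEquiv]

lemma digits_sum_eqv (n : ℕ) (a : Fin 2) (i : Fin (2 ^ n)) :
    (Nat.digits 2 ((eqv n) (a, i)).val).sum = a.val + (Nat.digits 2 i.val).sum := by
  rw [eqv_val]
  fin_cases a
  · simp
  · simp only [Fin.isValue]
    rw [show i.val + 2 ^ n * 1 = 2 ^ n + i.val by ring,
      digits_sum_pow_add n i.val i.isLt]

lemma polarP_succ_apply (n : ℕ) (a b : Fin 2) (i j : Fin (2 ^ n)) :
    polarP (n+1) ((eqv n) (a, i)) ((eqv n) (b, j)) = Pmat a b * polarP n i j := by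
  show (Matrix.reindex (finProdFinEquiv.trans (finCongr (by ring)))
      (finProdFinEquiv.trans (finCongr (by ring)))
      (Matrix.kroneckerMap (· * ·) Pmat (polarP n))) ((eqv n) (a, i)) ((eqv n) (b, j))
      = _
  rw [Matrix.reindex_apply]
  show (Matrix.kroneckerMap (· * ·) Pmat (polarP n))
      ((eqv n).symm ((eqv n) (a, i))) ((eqv n).symm ((eqv n) (b, j))) = _
  rw [Equiv.symm_apply_apply, Equiv.symm_apply_apply]
  rfl

/-- Splitting the codeword. -/
lemma vecMul_polarP_succ (n : ℕ) (v : Fin (2 ^ (n+1)) → ZMod 2) (b : Fin 2)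
    (j : Fin (2 ^ n)) :
    (v ᵥ* polarP (n+1)) ((eqv n) (b, j)) =
      (((fun i => v ((eqv n) (0, i)) * Pmat 0 b + v ((eqv n) (1, i)) * Pmat 1 b))
        ᵥ* polarP n) j := by
  rw [Matrix.vecMul, dotProduct]
  rw [← Equiv.sum_comp (eqv n) fun k => v k * polarP (n+1) k ((eqv n) (b, j))]
  rw [Fintype.sum_prod_type]
  rw [Matrix.vecMul, dotProduct]
  rw [Fin.sum_univ_two]
  rw [← Finset.sum_add_distrib]
  congr 1
  ext i
  rw [polarP_succ_apply, polarP_succ_apply]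
  ring

lemma hammingNorm_split (n : ℕ) (c : Fin (2 ^ (n+1)) → ZMod 2) :
    hammingNorm c = hammingNorm (fun j => c ((eqv n) (0, j)))
      + hammingNorm (fun j => c ((eqv n) (1, j))) := by
  simp only [hammingNorm, Finset.card_filter]
  rw [← Equiv.sum_comp (eqv n) fun k => if c k ≠ 0 then 1 else 0]
  rw [Fintype.sum_prod_type, Fin.sum_univ_two]

lemma key : ∀ n (v : Fin (2 ^ n) → ZMod 2), v ≠ 0 →
    ∃ i, v i ≠ 0 ∧ 2 ^ (Nat.digits 2 i.val).sum ≤ hammingNorm (v ᵥ* polarP n) := by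
  intro n
  induction n with
  | zero =>
    intro v hv
    have : ∃ i, v i ≠ 0 := by
      by_contra h
      push_neg at h
      exact hv (funext fun i => h i)
    obtain ⟨i, hi⟩ := this
    refine ⟨i, hi, ?_⟩
    have hval : i.val = 0 := by omega
    rw [hval]
    simp only [Nat.digits_zero, List.sum_nil, pow_zero]
    have : v ᵥ* polarP 0 = v := by
      show v ᵥ* 1 = v
      exact Matrix.vecMul_one v
    rw [this]
    exact Nat.one_le_iff_ne_zero.mpr (hammingNorm_ne_zero_iff.mpr hv)
  | succ n ih =>
    intro v hv
    set v0 : Fin (2 ^ n) → ZMod 2 := fun i => v ((eqv n) (0, i)) with hv0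
    set v1 : Fin (2 ^ n) → ZMod 2 := fun i => v ((eqv n) (1, i)) with hv1
    set c := v ᵥ* polarP (n+1) with hc
    have hc0 : ∀ j, c ((eqv n) (0, j)) = ((v0 + v1) ᵥ* polarP n) j := by
      intro j
      rw [hc, vecMul_polarP_succ]
      congr 1
      ext i
      show v ((eqv n) (0, i)) * Pmat 0 0 + v ((eqv n) (1, i)) * Pmat 1 0 = v0 i + v1 i
      simp [Pmat, hv0, hv1]
    have hc1 : ∀ j, c ((eqv n) (1, j)) = (v1 ᵥ* polarP n) j := by
      intro j
      rw [hc, vecMul_polarP_succ]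
      congr 1
      ext i
      show v ((eqv n) (0, i)) * Pmat 0 1 + v ((eqv n) (1, i)) * Pmat 1 1 = v1 i
      simp [Pmat, hv1]
    have hsplit : hammingNorm c = hammingNorm ((v0 + v1) ᵥ* polarP n)
        + hammingNorm (v1 ᵥ* polarP n) := by
      rw [hammingNorm_split n c]
      congr 1
      · exact congrArg _ (funext hc0)
      · exact congrArg _ (funext hc1)
    by_cases h1 : v1 = 0
    · -- v0 ≠ 0
      have h0 : v0 ≠ 0 := by
        intro h0
        apply hv
        funext k
        have := (eqv n).surjective k
        obtain ⟨⟨a, i⟩, rfl⟩ := this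
        fin_cases a
        · exact congrFun h0 i
        · exact congrFun h1 i
      obtain ⟨i, hi, hbound⟩ := ih (v0 + v1) (by simpa [h1] using h0)
      refine ⟨(eqv n) (0, i), ?_, ?_⟩
      · simpa [h1] using hi
      · rw [digits_sum_eqv]
        simp only [Fin.val_zero, zero_add]
        calc 2 ^ (Nat.digits 2 i.val).sum
            ≤ hammingNorm ((v0 + v1) ᵥ* polarP n) := hbound
          _ ≤ hammingNorm c := by omega
    · obtain ⟨i, hi, hbound⟩ := ih v1 h1
      by_cases h01 : v0 + v1 = 0
      · -- v0 = v1
        have hveq : v0 i = v1 i := by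
          have := congrFun h01 i
          have h2 : v0 i + v1 i = 0 := this
          revert h2
          generalize v0 i = x
          generalize v1 i = y
          revert x y
          decide
        refine ⟨(eqv n) (0, i), ?_, ?_⟩
        · show v0 i ≠ 0
          rw [hveq]; exact hi
        · rw [digits_sum_eqv]
          simp only [Fin.val_zero, zero_add]
          calc 2 ^ (Nat.digits 2 i.val).sum
              ≤ hammingNorm (v1 ᵥ* polarP n) := hbound
            _ ≤ hammingNorm c := by omega
      · obtain ⟨i', hi', hbound'⟩ := ih (v0 + v1) h01
        by_cases hcmp : 2 ^ (Nat.digits 2 i.val).sum ≤ 2 ^ (Nat.digits 2 i'.val).sum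
        · refine ⟨(eqv n) (1, i), hi, ?_⟩
          rw [digits_sum_eqv]
          have : 2 ^ ((1:Fin 2).val + (Nat.digits 2 i.val).sum)
              = 2 ^ (Nat.digits 2 i.val).sum + 2 ^ (Nat.digits 2 i.val).sum := by
            simp [pow_succ]; ring
          rw [this]
          omega
        · push_neg at hcmp
          by_cases hv0i : v0 i' ≠ 0
          · refine ⟨(eqv n) (0, i'), hv0i, ?_⟩
            rw [digits_sum_eqv]
            simp only [Fin.val_zero, zero_add]
            omega
          · push_neg at hv0i
            have hv1i : v1 i' ≠ 0 := by
              intro h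
              apply hi'
              show v0 i' + v1 i' = 0
              rw [hv0i, h, add_zero]
            refine ⟨(eqv n) (1, i'), hv1i, ?_⟩
            rw [digits_sum_eqv]
            have : 2 ^ ((1:Fin 2).val + (Nat.digits 2 i'.val).sum)
                = 2 ^ (Nat.digits 2 i'.val).sum + 2 ^ (Nat.digits 2 i'.val).sum := by
              simp [pow_succ]; ring
            rw [this]
            omega

/-- The minimum weight of a nonzero codeword of the polar code with information
set `𝒜` is at least `min_{i∈𝒜} 2^{w(i)}`. -/
theorem polar_min_distance_lower_bound (n : ℕ) (A : Finset (Fin (2 ^ n)))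
    (hA : A.Nonempty) (v : Fin (2 ^ n) → ZMod 2) (hv : v ≠ 0)
    (hsupp : ∀ i : Fin (2 ^ n), v i ≠ 0 → i ∈ A) :
    (A.image fun i => 2 ^ ((Nat.digits 2 i.val).sum)).min' (hA.image _) ≤
      hammingNorm (v ᵥ* polarP n) := by
  obtain ⟨i, hi, hbound⟩ := key n v hv
  exact le_trans (Finset.min'_le _ _ (Finset.mem_image_of_mem _ (hsupp i hi))) hbound
end

section
/- With G the PAC precoding matrix (upper-triangular Toeplitz, g₀ = 1) and P_n the polar transform over 𝔽₂, for every nonzero v ∈ 𝔽₂^N with least nonzero index i, the PAC codeword v·G·P_n has Hamming weight at least 2^{w(i)}. Consequently the minimum distance of the PAC code with information set 𝒜 is at least min_{i∈𝒜} 2^{w(i)}. -/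
open Matrix

/-- The N×N upper-triangular Toeplitz convolutional precoding matrix:
`G i j = g (j - i)` when `0 ≤ j - i ≤ m`, else `0`. -/
def toeplitzG (N m : ℕ) (g : ℕ → ZMod 2) : Matrix (Fin N) (Fin N) (ZMod 2) :=
  Matrix.of fun i j => if i.val ≤ j.val ∧ j.val - i.val ≤ m then g (j.val - i.val) else 0

/-- The index equivalence used in `polarP`. -/
def eEquiv (n : ℕ) : Fin 2 × Fin (2 ^ n) ≃ Fin (2 ^ (n + 1)) :=
  finProdFinEquiv.trans (finCongr (by ring))

lemma eEquiv_val (n : ℕ) (a : Fin 2) (b : Fin (2 ^ n)) :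
    ((eEquiv n) (a, b)).val = b.val + 2 ^ n * a.val := rfl

lemma dsum_div (b : ℕ) : (Nat.digits 2 b).sum = b % 2 + (Nat.digits 2 (b / 2)).sum := by
  rcases Nat.eq_zero_or_pos b with h | h
  · simp [h]
  · rw [Nat.digits_def' (by norm_num : 1 < 2) h]; simp

lemma dsum_add_pow : ∀ n b : ℕ, b < 2 ^ n →
    (Nat.digits 2 (b + 2 ^ n)).sum = (Nat.digits 2 b).sum + 1 := by
  intro n
  induction n with
  | zero => intro b hb; interval_cases b; simp
  | succ n ih =>
    intro b hb
    have hpow : (2 : ℕ) ^ (n + 1) = 2 * 2 ^ n := by ring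
    rw [dsum_div (b + 2 ^ (n + 1)), dsum_div b]
    have hmod : (b + 2 ^ (n + 1)) % 2 = b % 2 := by omega
    have hdiv : (b + 2 ^ (n + 1)) / 2 = b / 2 + 2 ^ n := by omega
    rw [hmod, hdiv, ih (b / 2) (by omega)]
    ring

lemma hn_triangle {ι : Type*} [Fintype ι] (x y : ι → ZMod 2) :
    hammingNorm x ≤ hammingNorm (x + y) + hammingNorm y := by
  have h1 : hammingNorm x = hammingDist (x + y) y := by
    rw [hammingDist_comm, hammingDist_eq_hammingNorm]; congr 1; abel
  rw [h1]
  calc hammingDist (x + y) y ≤ hammingDist (x + y) 0 + hammingDist 0 y :=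
        hammingDist_triangle _ _ _
    _ = hammingNorm (x + y) + hammingNorm y := by
        rw [hammingDist_zero_right, hammingDist_comm, hammingDist_zero_right]

lemma hn_split (n : ℕ) (f : Fin (2 ^ (n + 1)) → ZMod 2) :
    hammingNorm f = hammingNorm (fun d => f (eEquiv n (0, d)))
      + hammingNorm (fun d => f (eEquiv n (1, d))) := by
  classical
  simp only [hammingNorm, Finset.card_filter]
  rw [← Equiv.sum_comp (eEquiv n) (fun k => if f k ≠ 0 then 1 else 0)]
  rw [Fintype.sum_prod_type, Fin.sum_univ_two]

lemma vecMul_polar_succ (n : ℕ) (u : Fin (2 ^ (n + 1)) → ZMod 2) (c : Fin 2) (d : Fin (2 ^ n)) :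
    (u ᵥ* polarP (n + 1)) (eEquiv n (c, d)) =
      Pmat 0 c * ((fun b => u (eEquiv n (0, b))) ᵥ* polarP n) d
      + Pmat 1 c * ((fun b => u (eEquiv n (1, b))) ᵥ* polarP n) d := by
  classical
  have : (u ᵥ* polarP (n + 1)) (eEquiv n (c, d)) =
      ∑ p : Fin 2 × Fin (2 ^ n),
        u (eEquiv n p) * (Pmat p.1 c * polarP n p.2 d) := by
    show (∑ j, u j * (polarP (n + 1)) j (eEquiv n (c, d))) = _
    rw [← Equiv.sum_comp (eEquiv n) (fun j => u j * (polarP (n + 1)) j (eEquiv n (c, d)))]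
    apply Finset.sum_congr rfl
    intro p _
    congr 1
    show (Matrix.reindex (eEquiv n) (eEquiv n)
      (Matrix.kroneckerMap (· * ·) Pmat (polarP n))) (eEquiv n p) (eEquiv n (c, d)) = _
    simp [Matrix.reindex_apply, Matrix.submatrix_apply, Matrix.kroneckerMap]
  rw [this, Fintype.sum_prod_type, Fin.sum_univ_two]
  have hv : ∀ (a : Fin 2) (w : Fin (2 ^ n) → ZMod 2),
      Pmat a c * (w ᵥ* polarP n) d = ∑ b, w b * (Pmat a c * polarP n b d) := by
    intro a w
    show Pmat a c * (∑ b, w b * polarP n b d) = _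
    rw [Finset.mul_sum]
    apply Finset.sum_congr rfl
    intro b _
    ring
  rw [hv, hv]

lemma polar_bound : ∀ (n : ℕ) (u : Fin (2 ^ n) → ZMod 2) (i : Fin (2 ^ n)),
    u i ≠ 0 → (∀ j, j < i → u j = 0) →
    2 ^ ((Nat.digits 2 i.val).sum) ≤ hammingNorm (u ᵥ* polarP n) := by
  intro n
  induction n with
  | zero =>
    intro u i hi _
    have hi0 : i.val = 0 := by omega
    have : u ᵥ* polarP 0 = u := by
      show u ᵥ* (1 : Matrix (Fin (2 ^ 0)) (Fin (2 ^ 0)) (ZMod 2)) = u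
      simp
    rw [this, hi0]
    simp only [Nat.digits_zero, List.sum_nil, pow_zero]
    exact Nat.one_le_iff_ne_zero.mpr (hammingNorm_ne_zero_iff.mpr
      (fun h => hi (by simp [h])))
  | succ n ih =>
    intro u i hi hmin
    obtain ⟨⟨a, b⟩, rfl⟩ : ∃ p, eEquiv n p = i := ⟨(eEquiv n).symm i, (eEquiv n).apply_symm_apply i⟩
    have hsplit : hammingNorm (u ᵥ* polarP (n + 1)) =
        hammingNorm (((fun b => u (eEquiv n (0, b))) ᵥ* polarP n)
          + ((fun b => u (eEquiv n (1, b))) ᵥ* polarP n))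
        + hammingNorm ((fun b => u (eEquiv n (1, b))) ᵥ* polarP n) := by
      rw [hn_split n]
      congr 1
      · congr 1; funext d; rw [vecMul_polar_succ]
        simp [Pmat]
      · congr 1; funext d; rw [vecMul_polar_succ]
        simp [Pmat]
    rw [hsplit]
    set x := (fun b => u (eEquiv n (0, b))) ᵥ* polarP n with hx
    set y := (fun b => u (eEquiv n (1, b))) ᵥ* polarP n with hy
    have ha : a = 0 ∨ a = 1 := by
      rcases a with ⟨av, hav⟩
      interval_cases av
      · left; rfl
      · right; rfl
    rcases ha with rfl | rfl
    · -- a = 0 : i.val = b.val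
      have hval : (eEquiv n ((0 : Fin 2), b)).val = b.val := by
        rw [eEquiv_val, Fin.val_zero]; ring
      have h1 : 2 ^ ((Nat.digits 2 b.val).sum) ≤ hammingNorm x := by
        apply ih (fun b' => u (eEquiv n (0, b'))) b hi
        intro j hj
        apply hmin
        rw [Fin.lt_def, eEquiv_val, eEquiv_val]
        simp only [Fin.val_zero, mul_zero, add_zero]
        exact Fin.lt_def.mp hj
      rw [hval]
      exact le_trans h1 (hn_triangle x y)
    · -- a = 1 : i.val = b.val + 2^n
      have hval : (eEquiv n ((1 : Fin 2), b)).val = b.val + 2 ^ n := by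
        rw [eEquiv_val, Fin.val_one]; ring
      have hx0 : x = 0 := by
        have hfun : (fun b' => u (eEquiv n ((0 : Fin 2), b'))) = 0 := by
          funext b'
          apply hmin
          rw [Fin.lt_def, eEquiv_val, hval, Fin.val_zero]
          have := b'.isLt
          omega
        rw [hx, hfun, Matrix.zero_vecMul]
      have h1 : 2 ^ ((Nat.digits 2 b.val).sum) ≤ hammingNorm y := by
        apply ih (fun b' => u (eEquiv n (1, b'))) b hi
        intro j hj
        apply hmin
        rw [Fin.lt_def, eEquiv_val, eEquiv_val]
        simp only [Fin.val_one, mul_one]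
        have := Fin.lt_def.mp hj
        omega
      rw [hval, hx0, zero_add, dsum_add_pow n b.val b.isLt, pow_succ]
      omega

lemma toeplitz_apply_min {N m : ℕ} (g : ℕ → ZMod 2) (hg : g 0 = 1)
    (v : Fin N → ZMod 2) (i : Fin N) (hmin : ∀ j, j < i → v j = 0) :
    (v ᵥ* toeplitzG N m g) i = v i ∧ ∀ j, j < i → (v ᵥ* toeplitzG N m g) j = 0 := by
  constructor
  · show (∑ k, v k * toeplitzG N m g k i) = v i
    rw [Finset.sum_eq_single i]
    · simp [toeplitzG, hg]
    · intro k _ hk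
      rcases lt_or_gt_of_ne hk with h | h
      · rw [hmin k h, zero_mul]
      · have hlt : i.val < k.val := Fin.lt_def.mp h
        have hneg : ¬ (k.val ≤ i.val ∧ i.val - k.val ≤ m) := by omega
        simp only [toeplitzG, Matrix.of_apply, if_neg hneg, mul_zero]
    · intro h; exact absurd (Finset.mem_univ i) h
  · intro j hj
    show (∑ k, v k * toeplitzG N m g k j) = 0
    apply Finset.sum_eq_zero
    intro k _
    by_cases hk : k.val ≤ j.val
    · have : k < i := lt_of_le_of_lt (Fin.le_def.mpr hk) hj
      rw [hmin k this, zero_mul]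
    · have hneg : ¬ (k.val ≤ j.val ∧ j.val - k.val ≤ m) := by omega
      simp only [toeplitzG, Matrix.of_apply, if_neg hneg, mul_zero]

/-- Every nonzero PAC codeword `v·G·P_n` with least nonzero index `i` of `v` has
weight at least `2^{w(i)}`; consequently the minimum distance of the PAC code
with information set `𝒜` is at least `min_{i∈𝒜} 2^{w(i)}`. -/
theorem pac_weight_lower_bound (n m : ℕ) (g : ℕ → ZMod 2) (hg : g 0 = 1)
    (A : Finset (Fin (2 ^ n))) (hA : A.Nonempty) :
    (∀ (v : Fin (2 ^ n) → ZMod 2) (i : Fin (2 ^ n)), v ≠ 0 → v i ≠ 0 →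
      (∀ j : Fin (2 ^ n), j < i → v j = 0) →
      2 ^ ((Nat.digits 2 i.val).sum) ≤
        hammingNorm ((v ᵥ* toeplitzG (2 ^ n) m g) ᵥ* polarP n)) ∧
    (∀ v : Fin (2 ^ n) → ZMod 2, v ≠ 0 → (∀ i : Fin (2 ^ n), v i ≠ 0 → i ∈ A) →
      (A.image fun i => 2 ^ ((Nat.digits 2 i.val).sum)).min' (hA.image _) ≤
        hammingNorm ((v ᵥ* toeplitzG (2 ^ n) m g) ᵥ* polarP n)) := by
  classical
  have main : ∀ (v : Fin (2 ^ n) → ZMod 2) (i : Fin (2 ^ n)), v i ≠ 0 →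
      (∀ j : Fin (2 ^ n), j < i → v j = 0) →
      2 ^ ((Nat.digits 2 i.val).sum) ≤
        hammingNorm ((v ᵥ* toeplitzG (2 ^ n) m g) ᵥ* polarP n) := by
    intro v i hi hmin
    obtain ⟨h1, h2⟩ := toeplitz_apply_min (m := m) g hg v i hmin
    exact polar_bound n (v ᵥ* toeplitzG (2 ^ n) m g) i (h1 ▸ hi) h2
  refine ⟨fun v i _ => main v i, fun v hv hsupp => ?_⟩
  have hne : (Finset.univ.filter fun i => v i ≠ 0).Nonempty := by
    obtain ⟨i, hi⟩ := Function.ne_iff.mp hv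
    exact ⟨i, by simpa using hi⟩
  set i := (Finset.univ.filter fun i => v i ≠ 0).min' hne with hidef
  have hi : v i ≠ 0 := by
    have := Finset.min'_mem _ hne
    rw [← hidef] at this
    exact (Finset.mem_filter.mp this).2
  have hmin : ∀ j, j < i → v j = 0 := by
    intro j hj
    by_contra h
    have hj' : j ∈ Finset.univ.filter fun i => v i ≠ 0 := Finset.mem_filter.mpr ⟨Finset.mem_univ _, h⟩
    exact absurd (Finset.min'_le _ _ hj') (not_le.mpr (hidef ▸ hj))
  calc (A.image fun i => 2 ^ ((Nat.digits 2 i.val).sum)).min' (hA.image _)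
      ≤ 2 ^ ((Nat.digits 2 i.val).sum) :=
        Finset.min'_le _ _ (Finset.mem_image_of_mem _ (hsupp i hi))
    _ ≤ _ := main v i hi hmin
end
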